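/- Let (X,+) be a group on the countably infinite set X. For a subgroup H of X, let C_H be the set of all finitary operations on X that are either projections or, up to fictitious variables, of the form x ↦ a + x_k for some a ∈ H and coordinate k (i.e., all n-ary operations (x_1,…,x_n) ↦ a + x_k with a ∈ H, together with all projections). Then each C_H is a local clone, the unary operations of C_H are exactly the translations x ↦ a + x with a ∈ H, and the map H ↦ C_H from the subgroup lattice of X into the lattice Cll(X) of local clones is injective, order-preserving, and preserves arbitrary meets and joins. -/

import Mathlib

/-- A finitary operation on `X`: an `(n+1)`-ary function `X^(n+1) → X` (arities are ≥ 1). -/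
abbrev FinOp (X : Type) := Σ n : ℕ, (Fin (n + 1) → X) → X

/-- A finitary relation on `X`: an `(m+1)`-ary relation `ρ ⊆ X^(m+1)` (arities are ≥ 1). -/
abbrev FinRel (X : Type) := Σ m : ℕ, Set (Fin (m + 1) → X)

variable {X : Type}

/-- `C` is a clone: it contains all projections and is closed under composition. -/
def IsClone (C : Set (FinOp X)) : Prop :=
  (∀ (n : ℕ) (k : Fin (n + 1)), (⟨n, fun x => x k⟩ : FinOp X) ∈ C) ∧
  (∀ (n m : ℕ) (f : (Fin (n + 1) → X) → X) (g : Fin (n + 1) → (Fin (m + 1) → X) → X),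
    (⟨n, f⟩ : FinOp X) ∈ C → (∀ i, (⟨m, g i⟩ : FinOp X) ∈ C) →
    (⟨m, fun x => f fun i => g i x⟩ : FinOp X) ∈ C)

/-- `C` is a local clone: a clone each of whose `n`-ary fragments is closed in the
product topology on `X^(X^n)`, where `X` carries the discrete topology. -/
def IsLocalClone (C : Set (FinOp X)) : Prop :=
  IsClone C ∧
  ∀ n : ℕ,
    letI : TopologicalSpace X := ⊥
    IsClosed {f : (Fin (n + 1) → X) → X | (⟨n, f⟩ : FinOp X) ∈ C}

/-- The smallest local clone containing `F` (the local clone generated by `F`). -/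
def cllClosure (F : Set (FinOp X)) : Set (FinOp X) :=
  ⋂₀ {C : Set (FinOp X) | IsLocalClone C ∧ F ⊆ C}

/-- `f` preserves the relation `ρ`. -/
def Preserves {n m : ℕ} (f : (Fin (n + 1) → X) → X) (ρ : Set (Fin (m + 1) → X)) : Prop :=
  ∀ r : Fin (n + 1) → Fin (m + 1) → X, (∀ i, r i ∈ ρ) → (fun j => f fun i => r i j) ∈ ρ

/-- `Pol R`: all finitary operations preserving every relation in `R`. -/
def Polymorphisms (R : Set (FinRel X)) : Set (FinOp X) :=
  {f | ∀ ρ ∈ R, Preserves f.2 ρ.2}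

/-- `Inv F`: all finitary relations invariant under every operation in `F`. -/
def Invariants (F : Set (FinOp X)) : Set (FinRel X) :=
  {ρ | ∀ f ∈ F, Preserves f.2 ρ.2}

/-- The clone of projections. -/
def projClone (X : Type) : Set (FinOp X) :=
  {f | ∃ k : Fin (f.1 + 1), f.2 = fun x => x k}

/-- For a subgroup `H` of the group `(X, +)`, the set of all finitary operations on `X`
which are projections or, up to fictitious variables, translations `x ↦ a + x_k` by
elements `a ∈ H`. -/
def transClone {X : Type} [AddGroup X] (H : AddSubgroup X) : Set (FinOp X) :=
  {f | (∃ k : Fin (f.1 + 1), f.2 = fun x => x k) ∨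
       (∃ a ∈ H, ∃ k : Fin (f.1 + 1), f.2 = fun x => a + x k)}


section Aux

variable {X : Type}

lemma mem_transClone [AddGroup X] (H : AddSubgroup X) (n : ℕ) (f : (Fin (n+1) → X) → X) :
    (⟨n, f⟩ : FinOp X) ∈ transClone H ↔ ∃ a ∈ H, ∃ k : Fin (n+1), f = fun x => a + x k := by
  change ((∃ k : Fin (n+1), f = fun x => x k) ∨
    (∃ a ∈ H, ∃ k : Fin (n+1), f = fun x => a + x k)) ↔ _
  constructor
  · rintro (⟨k, rfl⟩ | ⟨a, ha, k, rfl⟩)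
    · exact ⟨0, H.zero_mem, k, by funext x; simp⟩
    · exact ⟨a, ha, k, rfl⟩
  · rintro ⟨a, ha, k, rfl⟩
    exact Or.inr ⟨a, ha, k, rfl⟩

lemma isClone_transClone [AddGroup X] (H : AddSubgroup X) : IsClone (transClone H) := by
  constructor
  · intro n k; exact Or.inl ⟨k, rfl⟩
  · intro n m f g hf hg
    rw [mem_transClone] at hf ⊢
    obtain ⟨a, ha, k, rfl⟩ := hf
    obtain ⟨b, hb, j, hgk⟩ := (mem_transClone H m (g k)).mp (hg k)
    exact ⟨a + b, H.add_mem ha hb, j, by funext x; simp [hgk, add_assoc]⟩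

lemma isLocalClone_transClone [Infinite X] [AddGroup X] (H : AddSubgroup X) :
    IsLocalClone (transClone H) := by
  refine ⟨isClone_transClone H, ?_⟩
  intro n
  letI : TopologicalSpace X := ⊥
  haveI : DiscreteTopology X := ⟨rfl⟩
  have hne : Nonempty X := inferInstance
  set c : Fin (n+1) → X := fun _ => Classical.arbitrary X with hc
  have hset : {f : (Fin (n+1) → X) → X | (⟨n, f⟩ : FinOp X) ∈ transClone H}
      = ⋃ k : Fin (n+1),
          ({f : (Fin (n+1) → X) → X | f c - c k ∈ H} ∩
           ⋂ x : Fin (n+1) → X, {f : (Fin (n+1) → X) → X | f x = (f c - c k) + x k}) := by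
    ext f
    simp only [Set.mem_iUnion, Set.mem_inter_iff, Set.mem_iInter, Set.mem_setOf_eq,
      mem_transClone]
    constructor
    · rintro ⟨a, ha, k, rfl⟩
      refine ⟨k, ?_, fun x => ?_⟩ <;> simp [ha]
    · rintro ⟨k, h1, h2⟩
      exact ⟨f c - c k, h1, k, funext fun x => h2 x⟩
  rw [hset]
  apply isClosed_iUnion_of_finite
  intro k
  apply IsClosed.inter
  · have : {f : (Fin (n+1) → X) → X | f c - c k ∈ H}
        = (fun f : (Fin (n+1) → X) → X => f c) ⁻¹' {v : X | v - c k ∈ H} := rfl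
    rw [this]
    exact (isClosed_discrete _).preimage (continuous_apply c)
  · apply isClosed_iInter
    intro x
    have : {f : (Fin (n+1) → X) → X | f x = (f c - c k) + x k}
        = (fun f : (Fin (n+1) → X) → X => (f x, f c)) ⁻¹'
            {p : X × X | p.1 = (p.2 - c k) + x k} := rfl
    rw [this]
    exact (isClosed_discrete _).preimage ((continuous_apply x).prodMk (continuous_apply c))

lemma mem_iff_unary [AddGroup X] (H : AddSubgroup X) (a : X) :
    a ∈ H ↔ (⟨0, fun x => a + x 0⟩ : FinOp X) ∈ transClone H := by
  rw [mem_transClone]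
  constructor
  · exact fun ha => ⟨a, ha, 0, rfl⟩
  · rintro ⟨b, hb, k, h⟩
    have hk : k = 0 := Fin.ext (by omega)
    have := congrFun h (fun _ => 0)
    simp [hk] at this
    rwa [this]

lemma isLocalClone_cllClosure (F : Set (FinOp X)) : IsLocalClone (cllClosure F) := by
  refine ⟨⟨?_, ?_⟩, ?_⟩
  · intro n k C hC
    exact hC.1.1.1 n k
  · intro n m f g hf hg C hC
    exact hC.1.1.2 n m f g (hf C hC) (fun i => hg i C hC)
  · intro n
    letI : TopologicalSpace X := ⊥
    have : {f : (Fin (n+1) → X) → X | (⟨n, f⟩ : FinOp X) ∈ cllClosure F}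
        = ⋂ C ∈ {C : Set (FinOp X) | IsLocalClone C ∧ F ⊆ C},
            {f : (Fin (n+1) → X) → X | (⟨n, f⟩ : FinOp X) ∈ C} := by
      ext f
      simp [cllClosure, Set.mem_sInter]
    rw [this]
    exact isClosed_biInter fun C hC => hC.1.2 n

lemma subset_cllClosure (F : Set (FinOp X)) : F ⊆ cllClosure F :=
  fun _ hf _ hC => hC.2 hf

lemma sSup_eq_closure [AddGroup X] (S : Set (AddSubgroup X)) :
    sSup S = AddSubgroup.closure (⋃ H ∈ S, (H : Set X)) := by
  apply le_antisymm
  · apply sSup_le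
    intro H hH
    exact fun a ha => AddSubgroup.subset_closure (Set.mem_biUnion hH ha)
  · rw [AddSubgroup.closure_le]
    intro a ha
    obtain ⟨H, hH, haH⟩ := Set.mem_iUnion₂.mp ha
    exact le_sSup hH haH

end Aux

/-- For a group `(X,+)` on the countably infinite set `X`: every `C_H` is a
local clone, the unary part of `C_H` consists exactly of the translations by elements of `H`,
and `H ↦ C_H` is injective, order-preserving, and preserves arbitrary (nonempty) meets and
joins (meets of local clones being intersections and joins being generated local clones). -/
theorem transClone_embedding (X : Type) [Countable X] [Infinite X] [AddGroup X] :
    (∀ H : AddSubgroup X, IsLocalClone (transClone H)) ∧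
    (∀ H : AddSubgroup X,
      {g : (Fin 1 → X) → X | (⟨0, g⟩ : FinOp X) ∈ transClone H} =
        {g : (Fin 1 → X) → X | ∃ a ∈ H, g = fun x => a + x 0}) ∧
    Function.Injective (transClone (X := X)) ∧
    (∀ H K : AddSubgroup X, H ≤ K → transClone H ⊆ transClone K) ∧
    (∀ S : Set (AddSubgroup X), S.Nonempty →
      transClone (sInf S) = ⋂ H ∈ S, transClone H ∧
      transClone (sSup S) = cllClosure (⋃ H ∈ S, transClone H)) := by
  have mono : ∀ H K : AddSubgroup X, H ≤ K → transClone H ⊆ transClone K := by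
    intro H K hHK f hf
    obtain ⟨n, g⟩ := f
    rw [mem_transClone] at hf ⊢
    obtain ⟨a, ha, k, rfl⟩ := hf
    exact ⟨a, hHK ha, k, rfl⟩
  refine ⟨fun H => isLocalClone_transClone H, ?_, ?_, mono, ?_⟩
  · intro H
    ext g
    simp only [Set.mem_setOf_eq, mem_transClone]
    constructor
    · rintro ⟨a, ha, k, rfl⟩
      have hk : k = 0 := Fin.ext (by omega)
      exact ⟨a, ha, by rw [hk]⟩
    · rintro ⟨a, ha, rfl⟩
      exact ⟨a, ha, 0, rfl⟩
  · intro H K h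
    ext a
    rw [mem_iff_unary H, mem_iff_unary K, h]
  · intro S hS
    constructor
    · apply Set.Subset.antisymm
      · exact Set.subset_iInter₂ fun H hH => mono _ _ (sInf_le hH)
      · intro f hf
        obtain ⟨n, g⟩ := f
        obtain ⟨H0, hH0⟩ := hS
        have hf0 := Set.mem_iInter₂.mp hf H0 hH0
        rw [mem_transClone] at hf0
        obtain ⟨a, ha0, k, rfl⟩ := hf0
        rw [mem_transClone]
        refine ⟨a, ?_, k, rfl⟩
        rw [AddSubgroup.mem_sInf]
        intro H hH
        have hfH := Set.mem_iInter₂.mp hf H hH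
        rw [mem_transClone] at hfH
        obtain ⟨b, hb, j, hgb⟩ := hfH
        have := congrFun hgb (fun _ => 0)
        simp at this
        rwa [this]
    · set U : Set (FinOp X) := ⋃ H ∈ S, transClone H with hU
      have hLC : IsLocalClone (cllClosure U) := isLocalClone_cllClosure U
      apply Set.Subset.antisymm
      · -- transClone (sSup S) ⊆ cllClosure U
        intro f hf
        obtain ⟨n, g⟩ := f
        rw [mem_transClone] at hf
        obtain ⟨a, ha, k, rfl⟩ := hf
        -- first: unary translations by elements of sSup S are in cllClosure U
        have key : ∀ b : X, b ∈ sSup S → (⟨0, fun x => b + x 0⟩ : FinOp X) ∈ cllClosure U := by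
          intro b hb
          rw [sSup_eq_closure] at hb
          have hb' : b ∈ AddSubmonoid.closure ((⋃ H ∈ S, (H : Set X)) ∪ -(⋃ H ∈ S, (H : Set X))) := by
            rw [← AddSubgroup.closure_toAddSubmonoid]
            exact hb
          refine AddSubmonoid.closure_induction ?_ ?_ ?_ hb'
          · intro x hx
            have hx' : ∃ H ∈ S, x ∈ H := by
              rcases hx with hx | hx
              · obtain ⟨H, hH, hxH⟩ := Set.mem_iUnion₂.mp hx
                exact ⟨H, hH, hxH⟩
              · obtain ⟨H, hH, hxH⟩ := Set.mem_iUnion₂.mp (Set.mem_neg.mp hx)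
                exact ⟨H, hH, by simpa using H.neg_mem hxH⟩
            obtain ⟨H, hH, hxH⟩ := hx'
            apply subset_cllClosure U
            exact Set.mem_biUnion hH ((mem_iff_unary H x).mp hxH)
          · have hproj := hLC.1.1 0 0
            have : (fun x : Fin 1 → X => (0 : X) + x 0) = fun x : Fin 1 → X => x 0 := by
              funext x; simp
            rw [show (⟨0, fun x => (0:X) + x 0⟩ : FinOp X) = ⟨0, fun x => x 0⟩ from by rw [this]]
            exact hproj
          · intro x y hx hy hpx hpy
            have hcomp := hLC.1.2 0 0 (fun v : Fin 1 → X => x + v 0)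
              (fun _ => fun v : Fin 1 → X => y + v 0) hpx (fun _ => hpy)
            have heq : (fun v : Fin 1 → X => (fun w : Fin 1 → X => x + w 0)
                (fun i => (fun _ : Fin 1 => fun w : Fin 1 → X => y + w 0) i v))
                = fun v : Fin 1 → X => (x + y) + v 0 := by
              funext v; simp [add_assoc]
            rwa [show (⟨0, fun v : Fin 1 → X => (fun w : Fin 1 → X => x + w 0)
                (fun i => (fun _ : Fin 1 => fun w : Fin 1 → X => y + w 0) i v)⟩ : FinOp X)
                = ⟨0, fun v : Fin 1 → X => (x + y) + v 0⟩ from by rw [heq]] at hcomp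
        have hun := key a ha
        have hproj := hLC.1.1 n k
        have hcomp := hLC.1.2 0 n (fun v : Fin 1 → X => a + v 0)
          (fun _ => fun x : Fin (n+1) → X => x k) hun (fun _ => hproj)
        exact hcomp
      · -- cllClosure U ⊆ transClone (sSup S)
        apply Set.sInter_subset_of_mem
        refine ⟨isLocalClone_transClone _, ?_⟩
        rw [hU]
        exact Set.iUnion₂_subset fun H hH => mono _ _ (le_sSup hH)
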